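/- For any rational function R(z) = D(z)/D(-z), where D is a polynomial with real coefficients such that all zeros of D(-z) are off the imaginary axis, and any antisymmetric-type matrix A ∈ g_Q with Q symmetric positive definite, the matrix D(-A) is invertible; hence R(A) = D(-A)⁻¹D(A) is well-defined and lies in G_Q. -/

import Mathlib

open Matrix Polynomial

/-- Eigenvalues of `A` with `QA + AᵀQ = 0`, `Q` pos. def., are purely imaginary. -/
lemma aux_eig10 {n : ℕ} (Q A : Matrix (Fin n) (Fin n) ℝ)
    (hQ : Q.PosDef) (hA : Q * A + Aᵀ * Q = 0)
    (z : ℂ) (v : Fin n → ℂ) (hv : v ≠ 0)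
    (heig : (A.map (algebraMap ℝ ℂ)) *ᵥ v = z • v) : z.re = 0 := by
  set f := algebraMap ℝ ℂ with hf
  set A' := A.map f with hA'def
  set Q' := Q.map f with hQ'def
  have hct : A'ᴴ = Aᵀ.map f := by
    ext i j
    simp [conjTranspose_apply, hA'def, Complex.conj_ofReal, hf]
  have hmapA : Q' * A' = -(Aᵀ.map f * Q') := by
    have h0 : (Q * A).map f + (Aᵀ * Q).map f = 0 := by
      rw [← Matrix.map_add _ (map_add f), hA, Matrix.map_zero _ (map_zero f)]
    rw [Matrix.map_mul, Matrix.map_mul] at h0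
    exact eq_neg_of_add_eq_zero_left h0
  set c := star v ⬝ᵥ (Q' *ᵥ v) with hc
  -- c has positive real part
  have hcre : c.re = (fun i => (v i).re) ⬝ᵥ (Q *ᵥ fun i => (v i).re)
      + (fun i => (v i).im) ⬝ᵥ (Q *ᵥ fun i => (v i).im) := by
    simp only [hc, dotProduct, mulVec, Complex.re_sum, Finset.mul_sum, Finset.sum_add_distrib]
    rw [← Finset.sum_add_distrib]
    refine Finset.sum_congr rfl fun i _ => ?_
    rw [← Finset.sum_add_distrib]
    refine Finset.sum_congr rfl fun j _ => ?_
    simp only [hQ'def, Pi.star_apply, map_apply, Complex.mul_re, Complex.mul_im,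
      RCLike.star_def, Complex.conj_re, Complex.conj_im, hf, Complex.coe_algebraMap,
      Complex.ofReal_re, Complex.ofReal_im]
    ring
  have hcne : c ≠ 0 := by
    have hpos : 0 < c.re := by
      rw [hcre]
      have hor : (fun i => (v i).re) ≠ 0 ∨ (fun i => (v i).im) ≠ 0 := by
        by_contra h
        push_neg at h
        apply hv
        funext i
        have h1 := congrFun h.1 i
        have h2 := congrFun h.2 i
        simp only [Pi.zero_apply] at h1 h2
        exact Complex.ext h1 h2
      rcases hor with h | h
      · have h1 := hQ.dotProduct_mulVec_pos h
        have h2 := hQ.posSemidef.dotProduct_mulVec_nonneg (fun i => (v i).im)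
        simp only [star_trivial] at h1 h2
        linarith
      · have h1 := hQ.dotProduct_mulVec_pos h
        have h2 := hQ.posSemidef.dotProduct_mulVec_nonneg (fun i => (v i).re)
        simp only [star_trivial] at h1 h2
        linarith
    intro h
    rw [h] at hpos
    simp at hpos
  -- sesquilinear computation
  have h1 : star v ⬝ᵥ (Q' *ᵥ (A' *ᵥ v)) = z * c := by
    rw [heig, Matrix.mulVec_smul, dotProduct_smul, smul_eq_mul]
  have h2 : star v ⬝ᵥ (Q' *ᵥ (A' *ᵥ v)) = -((starRingEnd ℂ) z * c) := by
    rw [mulVec_mulVec, hmapA, neg_mulVec, dotProduct_neg]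
    congr 1
    rw [← mulVec_mulVec, dotProduct_mulVec (star v) (Aᵀ.map f) (Q' *ᵥ v),
      ← hct, ← star_mulVec, heig, star_smul, smul_dotProduct, smul_eq_mul]
    rfl
  have hzc : (z + (starRingEnd ℂ) z) * c = 0 := by
    rw [add_mul, ← h1, h2]
    ring
  have hz : z + (starRingEnd ℂ) z = 0 := by
    rcases mul_eq_zero.mp hzc with h | h
    · exact h
    · exact absurd h hcne
  rw [Complex.add_conj] at hz
  have : (2 : ℝ) * z.re = 0 := by exact_mod_cast hz
  linarith


/-- Commutation: if `QA + AᵀQ = 0` then `Q p(A) = p(-A)ᵀ Q`. -/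
lemma aux_comm10 {n : ℕ} (Q A : Matrix (Fin n) (Fin n) ℝ)
    (hA : Q * A + Aᵀ * Q = 0) (p : Polynomial ℝ) :
    Q * aeval A p = (aeval (-A) p)ᵀ * Q := by
  have hQA : Q * A = (-A)ᵀ * Q := by
    rw [transpose_neg, neg_mul]
    exact eq_neg_of_add_eq_zero_left hA
  have hpow : ∀ k : ℕ, Q * A ^ k = ((-A)ᵀ) ^ k * Q := by
    intro k
    induction k with
    | zero => simp
    | succ k ih =>
      rw [pow_succ, pow_succ, ← mul_assoc, ih, mul_assoc, hQA, ← mul_assoc]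
  induction p using Polynomial.induction_on' with
  | add p q hp hq => simp [mul_add, add_mul, hp, hq]
  | monomial k c =>
    simp only [aeval_monomial, Algebra.algebraMap_eq_smul_one, smul_mul_assoc, one_mul,
      mul_smul_comm, transpose_smul, transpose_pow, hpow]

/-- Invertibility of `D(-A)`. -/
lemma aux_unit10 {n : ℕ} (Q A : Matrix (Fin n) (Fin n) ℝ)
    (hQ : Q.PosDef) (hA : Q * A + Aᵀ * Q = 0)
    (D : Polynomial ℝ)
    (hzeros : ∀ z : ℂ, aeval (-z) (D.map (algebraMap ℝ ℂ)) = 0 → z.re ≠ 0) :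
    IsUnit (aeval (-A) D) := by
  by_cases hdeg : 0 < D.degree
  · -- complexify
    set f := algebraMap ℝ ℂ with hf
    set A' := A.map f with hA'def
    set D' := D.map f with hD'def
    -- the determinant over ℝ equals the determinant over ℂ
    rw [Matrix.isUnit_iff_isUnit_det, isUnit_iff_ne_zero]
    intro hdet
    have hdet' : (aeval (-A') D').det = 0 := by
      have hmap : (aeval (-A) D).map f = aeval (-A') D' := by
        have h1 : (AlgHom.mapMatrix (Algebra.ofId ℝ ℂ)) (aeval (-A) D)
            = aeval ((AlgHom.mapMatrix (Algebra.ofId ℝ ℂ)) (-A)) D :=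
          (aeval_algHom_apply _ _ _).symm
        have h2 : (AlgHom.mapMatrix (Algebra.ofId ℝ ℂ)) (-A) = -A' := by
          ext i j; simp [AlgHom.mapMatrix_apply, hA'def, Algebra.ofId_apply, hf]
        have h3 : (AlgHom.mapMatrix (Algebra.ofId ℝ ℂ)) (aeval (-A) D)
            = (aeval (-A) D).map f := by
          ext i j; simp [AlgHom.mapMatrix_apply, Algebra.ofId_apply, hf]
        rw [← h3, h1, h2, hD'def, aeval_map_algebraMap]
      rw [← hmap, ← RingHom.mapMatrix_apply, ← RingHom.map_det, hdet, map_zero]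
    have hnotunit : ¬ IsUnit (aeval (-A') D') := by
      rw [Matrix.isUnit_iff_isUnit_det, isUnit_iff_ne_zero, not_not]
      exact hdet'
    have hdeg' : 0 < D'.degree := by
      rwa [hD'def, degree_map_eq_of_injective (algebraMap ℝ ℂ).injective]
    have h0 : (0 : ℂ) ∈ spectrum ℂ (aeval (-A') D') := (spectrum.zero_mem_iff ℂ).mpr hnotunit
    rw [spectrum.map_polynomial_aeval_of_degree_pos (-A') D' hdeg'] at h0
    obtain ⟨z, hzmem, hzeval⟩ := h0
    -- z is an eigenvalue of -A'
    rw [spectrum.mem_iff] at hzmem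
    have hdet0 : ((algebraMap ℂ (Matrix (Fin n) (Fin n) ℂ)) z - (-A')).det = 0 := by
      by_contra h
      exact hzmem ((Matrix.isUnit_iff_isUnit_det _).mpr (isUnit_iff_ne_zero.mpr h))
    obtain ⟨v, hv, hveq⟩ := (Matrix.exists_mulVec_eq_zero_iff).mpr hdet0
    have heig : A' *ᵥ v = (-z) • v := by
      have : (algebraMap ℂ (Matrix (Fin n) (Fin n) ℂ)) z *ᵥ v - (-A') *ᵥ v = 0 := by
        rw [← Matrix.sub_mulVec, hveq]
      rw [neg_mulVec, sub_neg_eq_add] at this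
      have hsc : (algebraMap ℂ (Matrix (Fin n) (Fin n) ℂ)) z *ᵥ v = z • v := by
        rw [Algebra.algebraMap_eq_smul_one, smul_mulVec, one_mulVec]
      rw [hsc] at this
      rw [neg_smul]
      linear_combination (norm := module) this
    have hre : (-z).re = 0 := aux_eig10 Q A hQ hA (-z) v hv heig
    have hne : (-z).re ≠ 0 := by
      apply hzeros (-z)
      rw [neg_neg]
      rw [show ((aeval z) D' : ℂ) = eval z D' from congrFun (Polynomial.coe_aeval_eq_eval z) D']
      exact hzeval
    exact hne hre
  · -- constant polynomial case
    have hD : D = C (D.coeff 0) := eq_C_of_degree_le_zero (not_lt.mp hdeg)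
    have hc : D.coeff 0 ≠ 0 := by
      intro h
      have hD0 : D = 0 := by rw [hD, h, map_zero]
      have := hzeros 0 (by simp [hD0])
      simp at this
    rw [hD, aeval_C]
    exact (isUnit_iff_ne_zero.mpr hc).map (algebraMap ℝ (Matrix (Fin n) (Fin n) ℝ))


/-- For a real polynomial `D` all of whose "reflected" zeros (zeros of
`z ↦ D(-z)`) avoid the imaginary axis, and `A ∈ g_Q` with `Q` symmetric
positive definite, `D(-A)` is invertible and `R(A) = D(-A)⁻¹ D(A)` lies in the
quadratic Lie group `G_Q`. -/
theorem stmt10 {n : ℕ} (Q A : Matrix (Fin n) (Fin n) ℝ)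
    (hQ : Q.PosDef) (hA : Q * A + Aᵀ * Q = 0)
    (D : Polynomial ℝ)
    (hzeros : ∀ z : ℂ, aeval (-z) (D.map (algebraMap ℝ ℂ)) = 0 → z.re ≠ 0) :
    IsUnit (aeval (-A) D) ∧
    ((aeval (-A) D)⁻¹ * aeval A D)ᵀ * Q * ((aeval (-A) D)⁻¹ * aeval A D) = Q := by
  have hU : IsUnit (aeval (-A) D) := aux_unit10 Q A hQ hA D hzeros
  refine ⟨hU, ?_⟩
  set N := aeval (-A) D with hN
  set P := aeval A D with hP
  have hNP : N * P = P * N := by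
    have h1 : N = aeval A (D.comp (-X)) := by
      rw [hN, aeval_comp]; simp
    rw [h1, hP, ← _root_.map_mul, ← _root_.map_mul, mul_comm]
  -- Q * P = Nᵀ * Q
  have h1 : Q * P = Nᵀ * Q := aux_comm10 Q A hA D
  -- transpose with Q symmetric : Pᵀ * Q = Q * N
  have hQsymm : Qᵀ = Q := hQ.1
  have h2 : Pᵀ * Q = Q * N := by
    have := congrArg Matrix.transpose h1
    rwa [transpose_mul, transpose_mul, hQsymm, transpose_transpose] at this
  have hNN : N * N⁻¹ = 1 := Matrix.mul_nonsing_inv N ((Matrix.isUnit_iff_isUnit_det N).mp hU)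
  have hNN' : N⁻¹ * N = 1 := Matrix.nonsing_inv_mul N ((Matrix.isUnit_iff_isUnit_det N).mp hU)
  have hcomm : N⁻¹ * P = P * N⁻¹ := by
    calc N⁻¹ * P = N⁻¹ * P * (N * N⁻¹) := by rw [hNN, mul_one]
    _ = N⁻¹ * (P * N) * N⁻¹ := by noncomm_ring
    _ = N⁻¹ * (N * P) * N⁻¹ := by rw [hNP]
    _ = (N⁻¹ * N) * (P * N⁻¹) := by noncomm_ring
    _ = P * N⁻¹ := by rw [hNN', one_mul]
  calc (N⁻¹ * P)ᵀ * Q * (N⁻¹ * P)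
      = (P * N⁻¹)ᵀ * Q * (P * N⁻¹) := by rw [hcomm]
    _ = (N⁻¹)ᵀ * (Pᵀ * Q) * (P * N⁻¹) := by rw [transpose_mul]; noncomm_ring
    _ = (N⁻¹)ᵀ * (Q * N) * (P * N⁻¹) := by rw [h2]
    _ = (N⁻¹)ᵀ * Q * (N * P * N⁻¹) := by noncomm_ring
    _ = (N⁻¹)ᵀ * Q * (P * (N * N⁻¹)) := by rw [hNP]; noncomm_ring
    _ = (N⁻¹)ᵀ * (Q * P) := by rw [hNN, mul_one]; noncomm_ring
    _ = (N⁻¹)ᵀ * (Nᵀ * Q) := by rw [h1]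
    _ = (N * N⁻¹)ᵀ * Q := by rw [transpose_mul]; noncomm_ring
    _ = Q := by rw [hNN, transpose_one, one_mul]
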